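/- Let A ∈ ℝ^{N×N} be a nonsingular M-matrix, i.e., Aᵢⱼ ≤ 0 for all i ≠ j and every eigenvalue of A over ℂ has positive real part. Then there exists a diagonal matrix G = diag(g₁, …, g_N) with all gᵢ > 0 such that GA + AᵀG is symmetric positive definite. -/

import Mathlib

open Matrix

open Finset Filter

lemma posdef_of_Z_semipos {N : ℕ} (B : Matrix (Fin N) (Fin N) ℝ)
    (hsym : Bᵀ = B) (hZ : ∀ i j, i ≠ j → B i j ≤ 0)
    (u : Fin N → ℝ) (hu : ∀ i, 0 < u i) (hBu : ∀ i, 0 < (B *ᵥ u) i) :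
    B.PosDef := by
  have hsym' : ∀ i j, B j i = B i j := by
    intro i j
    conv_lhs => rw [← hsym]
    rfl
  rw [Matrix.posDef_iff_dotProduct_mulVec]
  constructor
  · show Bᴴ = B
    ext i j
    simp [Matrix.conjTranspose_apply, hsym' i j]
  intro x hx
  have hxs : star x = x := star_trivial x
  rw [hxs]
  set y : Fin N → ℝ := fun i => x i / u i with hy
  have hterm : ∀ i j, (u i * u j * B i j) * (y i * y j) = x i * (B i j * x j) := by
    intro i j
    have hui := (hu i).ne'
    have huj := (hu j).ne'
    simp only [hy]
    field_simp
  have key : ∀ i j, (u i * u j * B i j) * (y i * y j)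
      ≥ (u i * u j * B i j) * ((y i * y i + y j * y j) / 2) := by
    intro i j
    rcases eq_or_ne i j with rfl | hij
    · apply ge_of_eq; ring
    · have hM : u i * u j * B i j ≤ 0 :=
        mul_nonpos_of_nonneg_of_nonpos (le_of_lt (mul_pos (hu i) (hu j))) (hZ i j hij)
      have : y i * y j ≤ (y i * y i + y j * y j) / 2 := by nlinarith [sq_nonneg (y i - y j)]
      exact mul_le_mul_of_nonpos_left this hM
  have hdot : x ⬝ᵥ (B *ᵥ x) = ∑ i, ∑ j, (u i * u j * B i j) * (y i * y j) := by
    simp only [dotProduct, mulVec, dotProduct, Finset.mul_sum, hterm]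
  have hsum2 : ∑ i, ∑ j, (u i * u j * B i j) * ((y i * y i + y j * y j) / 2)
      = ∑ i, (y i * y i) * (u i * (B *ᵥ u) i) := by
    have expand : ∀ i j, (u i * u j * B i j) * ((y i * y i + y j * y j) / 2)
        = (u i * u j * B i j) * (y i * y i) / 2 + (u j * u i * B j i) * (y j * y j) / 2 := by
      intro i j; rw [hsym' j i]; ring
    simp only [expand, Finset.sum_add_distrib]
    rw [Finset.sum_comm (f := fun i j => (u j * u i * B j i) * (y j * y j) / 2)]
    rw [← Finset.sum_add_distrib]
    congr 1
    ext i
    rw [← Finset.sum_add_distrib]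
    have : ∀ j, (u i * u j * B i j) * (y i * y i) / 2 + (u i * u j * B i j) * (y i * y i) / 2
        = (y i * y i) * (u i * (B i j * u j)) := by intro j; ring
    rw [Finset.sum_congr rfl fun j _ => this j]
    simp [mulVec, dotProduct, Finset.mul_sum]
  have hge : x ⬝ᵥ (B *ᵥ x) ≥ ∑ i, (y i * y i) * (u i * (B *ᵥ u) i) := by
    rw [hdot, ← hsum2]
    exact Finset.sum_le_sum fun i _ => Finset.sum_le_sum fun j _ => key i j
  have hpos : 0 < ∑ i, (y i * y i) * (u i * (B *ᵥ u) i) := by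
    obtain ⟨i0, hi0⟩ : ∃ i, x i ≠ 0 := Function.ne_iff.mp hx
    have hy0 : y i0 ≠ 0 := div_ne_zero hi0 (hu i0).ne'
    refine Finset.sum_pos' (fun i _ => ?_) ⟨i0, Finset.mem_univ i0, ?_⟩
    · exact mul_nonneg (mul_self_nonneg _) (le_of_lt (mul_pos (hu i) (hBu i)))
    · exact mul_pos (mul_self_pos.mpr hy0) (mul_pos (hu i0) (hBu i0))
  exact lt_of_lt_of_le hpos hge


section norms
variable {N : ℕ}

attribute [local instance] Matrix.linftyOpNormedAddCommGroup Matrix.linftyOpNormedRing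
  Matrix.linftyOpNormedSpace

local notation "Mat" => Matrix (Fin N) (Fin N) ℝ

lemma entry_abs_le_norm (M : Mat) (i j : Fin N) : |M i j| ≤ ‖M‖ := by
  have h1 : ‖M i j‖₊ ≤ ∑ j' : Fin N, ‖M i j'‖₊ :=
    Finset.single_le_sum (f := fun j' => ‖M i j'‖₊) (fun _ _ => zero_le) (Finset.mem_univ j)
  have h2 : (∑ j' : Fin N, ‖M i j'‖₊) ≤ ‖M‖₊ := by
    rw [Matrix.linfty_opNNNorm_def]
    exact Finset.le_sup (f := fun i => ∑ j' : Fin N, ‖M i j'‖₊) (Finset.mem_univ i)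
  have := (h1.trans h2)
  simpa [Real.norm_eq_abs] using (NNReal.coe_le_coe.mpr this : (‖M i j‖₊ : ℝ) ≤ ‖M‖₊)

lemma mul_entries_nonneg {M P : Mat} (hM : ∀ i j, 0 ≤ M i j) (hP : ∀ i j, 0 ≤ P i j) :
    ∀ i j, 0 ≤ (M * P) i j := by
  intro i j
  rw [Matrix.mul_apply]
  exact Finset.sum_nonneg fun k _ => mul_nonneg (hM i k) (hP k j)

lemma pow_entries_nonneg {C : Mat} (hC : ∀ i j, 0 ≤ C i j) (n : ℕ) :
    ∀ i j, 0 ≤ (C ^ n) i j := by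
  induction n with
  | zero => intro i j; simp [Matrix.one_apply]; split <;> norm_num
  | succ n ih =>
      rw [pow_succ]
      exact mul_entries_nonneg ih hC

lemma geom_inv_nonneg {C : Mat} (hC : ∀ i j, 0 ≤ C i j) (h : ‖C‖ < 1) :
    IsUnit (1 - C : Mat) ∧ ∀ i j, 0 ≤ ((1 - C : Mat)⁻¹) i j := by
  haveI : CompleteSpace Mat := FiniteDimensional.complete ℝ _
  have hunit : IsUnit (1 - C : Mat) := isUnit_one_sub_of_norm_lt_one h
  refine ⟨hunit, fun i j => ?_⟩
  have hinv : (1 - C : Mat)⁻¹ = Ring.inverse (1 - C : Mat) :=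
    Matrix.nonsing_inv_eq_ringInverse _
  set K := ‖Ring.inverse (1 - C : Mat)‖ with hK
  have hbound : ∀ n : ℕ,
      -(‖C‖ ^ (n + 1) * K) ≤ ((1 - C : Mat)⁻¹) i j := by
    intro n
    have hid := NormedRing.inverse_one_sub_nth_order' (R := Mat) (n + 1) h
    rw [hinv, hid]
    have hsum_entry : 0 ≤ (∑ k ∈ Finset.range (n + 1), C ^ k) i j := by
      rw [Matrix.sum_apply]  -- matrix sum entries
      exact Finset.sum_nonneg fun k _ => pow_entries_nonneg hC k i j
    have habs : |((C ^ (n + 1) * Ring.inverse (1 - C : Mat)) : Mat) i j|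
        ≤ ‖C‖ ^ (n + 1) * K := by
      refine (entry_abs_le_norm _ i j).trans ?_
      calc ‖(C ^ (n + 1) * Ring.inverse (1 - C : Mat) : Mat)‖
          ≤ ‖(C ^ (n+1) : Mat)‖ * K := norm_mul_le _ _
        _ ≤ ‖C‖ ^ (n + 1) * K :=
            mul_le_mul_of_nonneg_right (norm_pow_le' C (Nat.succ_pos n)) (norm_nonneg _)
    have := neg_le_of_abs_le habs
    show -(‖C‖ ^ (n + 1) * K) ≤ (∑ k ∈ Finset.range (n + 1), C ^ k) i j
        + ((C ^ (n + 1) * Ring.inverse (1 - C : Mat)) : Mat) i j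
    linarith
  have htend : Tendsto (fun n : ℕ => -(‖C‖ ^ (n + 1) * K)) atTop (nhds 0) := by
    have h0 : Tendsto (fun n : ℕ => ‖C‖ ^ n) atTop (nhds 0) :=
      tendsto_pow_atTop_nhds_zero_of_lt_one (norm_nonneg C) h
    have h1 : Tendsto (fun n : ℕ => ‖C‖ ^ (n + 1)) atTop (nhds 0) :=
      h0.comp (tendsto_add_atTop_nat 1)
    have := (h1.mul_const K).neg
    simpa using this
  exact le_of_tendsto htend (Eventually.of_forall hbound)

lemma step_down {M : Mat} (hdet : M.det ≠ 0) (hinv : ∀ i j, 0 ≤ M⁻¹ i j) :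
    ∃ δ : ℝ, 0 < δ ∧ ∀ ε : ℝ, 0 < ε → ε ≤ δ →
      (M - ε • 1).det ≠ 0 ∧ ∀ i j, 0 ≤ ((M - ε • 1)⁻¹) i j := by
  refine ⟨(2 * (‖M⁻¹‖ + 1))⁻¹, by positivity, fun ε hε hεδ => ?_⟩
  have hMunit : IsUnit M.det := isUnit_iff_ne_zero.mpr hdet
  have hC : ∀ i j, 0 ≤ (ε • M⁻¹ : Mat) i j := fun i j => by
    have : (ε • M⁻¹ : Mat) i j = ε * M⁻¹ i j := rfl
    rw [this]; exact mul_nonneg hε.le (hinv i j)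
  have hnorm : ‖(ε • M⁻¹ : Mat)‖ < 1 := by
    rw [norm_smul, Real.norm_eq_abs, abs_of_pos hε]
    calc ε * ‖M⁻¹‖ ≤ (2 * (‖M⁻¹‖ + 1))⁻¹ * ‖M⁻¹‖ := by
          apply mul_le_mul_of_nonneg_right hεδ (norm_nonneg _)
      _ < 1 := by
          rw [inv_mul_lt_iff₀ (by positivity)]
          nlinarith [norm_nonneg (M⁻¹ : Mat)]
  obtain ⟨hunit1, hnn1⟩ := geom_inv_nonneg hC hnorm
  have hfac : M - ε • 1 = M * (1 - ε • M⁻¹) := by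
    rw [mul_sub, Matrix.mul_smul, Matrix.mul_nonsing_inv _ hMunit, mul_one]
  constructor
  · rw [hfac, Matrix.det_mul]
    exact mul_ne_zero hdet (Matrix.isUnit_iff_isUnit_det _ |>.mp hunit1 |>.ne_zero)
  · rw [hfac, Matrix.mul_inv_rev]
    exact mul_entries_nonneg hnn1 hinv

lemma exists_start (A : Mat) (hoff : ∀ i j, i ≠ j → A i j ≤ 0) :
    ∃ c : ℝ, 0 ≤ c ∧ (A + c • 1).det ≠ 0 ∧ ∀ i j, 0 ≤ ((A + c • 1)⁻¹) i j := by
  set m : ℝ := 1 + ∑ i, |A i i| with hm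
  have hm1 : (1 : ℝ) ≤ m := by
    have : (0:ℝ) ≤ ∑ i, |A i i| := Finset.sum_nonneg fun i _ => abs_nonneg _
    linarith
  have hmpos : 0 < m := lt_of_lt_of_le one_pos hm1
  set D : Mat := m • 1 - A with hD
  have hDnn : ∀ i j, 0 ≤ D i j := by
    intro i j
    rcases eq_or_ne i j with rfl | hij
    · have hDii : D i i = m - A i i := by simp [hD]
      rw [hDii]
      have h1 : A i i ≤ |A i i| := le_abs_self _
      have h2 : |A i i| ≤ ∑ k, |A k k| :=
        Finset.single_le_sum (fun k _ => abs_nonneg (A k k)) (Finset.mem_univ i)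
      have hmeq : m = 1 + ∑ k, |A k k| := hm
      linarith
    · have hDij : D i j = -A i j := by simp [hD, Matrix.one_apply_ne hij]
      rw [hDij]; linarith [hoff i j hij]
  set c : ℝ := ‖D‖ with hc
  have hcnn : 0 ≤ c := norm_nonneg _
  refine ⟨c, hcnn, ?_⟩
  set C : Mat := (c + m)⁻¹ • D with hCdef
  have hcm : 0 < c + m := by linarith
  have hCnn : ∀ i j, 0 ≤ C i j := fun i j => by
    have : C i j = (c + m)⁻¹ * D i j := rfl
    rw [this]; exact mul_nonneg (by positivity) (hDnn i j)
  have hCnorm : ‖C‖ < 1 := by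
    rw [hCdef, norm_smul, Real.norm_eq_abs, abs_of_pos (by positivity)]
    rw [inv_mul_lt_iff₀ hcm, mul_one]
    simpa [hc] using hmpos
  obtain ⟨hunit1, hnn1⟩ := geom_inv_nonneg hCnn hCnorm
  have hfac : A + c • 1 = (c + m) • ((1 : Mat) - C) := by
    rw [hCdef, smul_sub, smul_smul, mul_inv_cancel₀ hcm.ne', one_smul, hD, add_smul]
    abel
  have hdet1 : ((1 : Mat) - C).det ≠ 0 :=
    (Matrix.isUnit_iff_isUnit_det _ |>.mp hunit1).ne_zero
  constructor
  · rw [hfac, Matrix.det_smul]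
    exact mul_ne_zero (pow_ne_zero _ hcm.ne') hdet1
  · rw [hfac]
    haveI : Invertible (c + m) := invertibleOfNonzero hcm.ne'
    have hsmul_inv : ((c + m) • ((1 : Mat) - C))⁻¹ = (c + m)⁻¹ • ((1 : Mat) - C)⁻¹ := by
      rw [Matrix.inv_smul (A := (1 : Mat) - C) (c + m)
        ((Matrix.isUnit_iff_isUnit_det _).mp hunit1), invOf_eq_inv]
    rw [hsmul_inv]
    intro i j
    have : ((c + m)⁻¹ • ((1 : Mat) - C)⁻¹) i j = (c + m)⁻¹ * ((1 : Mat) - C)⁻¹ i j := rfl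
    rw [this]
    exact mul_nonneg (by positivity) (hnn1 i j)

end norms

section cont
variable {N : ℕ}
local notation "Mat" => Matrix (Fin N) (Fin N) ℝ

lemma inv_nonneg_all (A : Mat) (hoff : ∀ i j, i ≠ j → A i j ≤ 0)
    (hdet : ∀ t : ℝ, 0 ≤ t → (A + t • 1).det ≠ 0) :
    ∀ i j, 0 ≤ A⁻¹ i j := by
  obtain ⟨c, hc0, hcdet, hcinv⟩ := exists_start A hoff
  set f : ℝ → Mat := fun t => A + t • 1 with hfdef
  have hf : Continuous f := continuous_const.add (continuous_id.smul continuous_const)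
  set S : Set ℝ := Set.Icc 0 c ∩ ⋂ p : Fin N × Fin N,
      {t | t ∈ Set.Icc 0 c ∧ 0 ≤ (f t)⁻¹ p.1 p.2} with hSdef
  have hmemS : ∀ t, t ∈ S ↔ (t ∈ Set.Icc 0 c ∧ ∀ i j, 0 ≤ (f t)⁻¹ i j) := by
    intro t
    simp only [hSdef, Set.mem_inter_iff, Set.mem_iInter, Set.mem_setOf_eq, Prod.forall]
    constructor
    · rintro ⟨h1, h2⟩; exact ⟨h1, fun i j => (h2 i j).2⟩
    · rintro ⟨h1, h2⟩; exact ⟨h1, fun i j => ⟨h1, h2 i j⟩⟩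
  have hcS : c ∈ S := (hmemS c).mpr ⟨⟨hc0, le_refl c⟩, hcinv⟩
  have hclosed : IsClosed S := by
    refine isClosed_Icc.inter (isClosed_iInter fun p => ?_)
    have hg : ContinuousOn (fun t => (f t)⁻¹ p.1 p.2) (Set.Icc 0 c) := by
      have hent : ∀ t, (f t)⁻¹ p.1 p.2
          = (Ring.inverse ((f t).det)) * (f t).adjugate p.1 p.2 := by
        intro t; rw [Matrix.inv_def]; rfl
      simp only [hent, Ring.inverse_eq_inv']
      exact ((hf.matrix_det.continuousOn).inv₀ fun t ht => hdet t ht.1).mul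
        ((hf.matrix_adjugate.matrix_elem p.1 p.2).continuousOn)
    exact hg.preimage_isClosed_of_isClosed isClosed_Icc (isClosed_Ici (a := (0:ℝ)))
  have hbdd : BddBelow S := ⟨0, fun t ht => ((hmemS t).mp ht).1.1⟩
  have hne : S.Nonempty := ⟨c, hcS⟩
  have ht0 : sInf S ∈ S := hclosed.csInf_mem hne hbdd
  obtain ⟨⟨ht0nn, ht0c⟩, ht0inv⟩ := (hmemS _).mp ht0
  rcases eq_or_lt_of_le ht0nn with heq | hpos
  · have h0 : sInf S = 0 := heq.symm
    intro i j
    have hthis := ht0inv i j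
    rw [h0] at hthis
    simpa [hfdef] using hthis
  · exfalso
    obtain ⟨δ, hδ, hstep⟩ := step_down (hdet _ ht0nn) ht0inv
    set ε := min δ (sInf S) with hε
    have hε0 : 0 < ε := lt_min hδ hpos
    obtain ⟨hd2, hi2⟩ := hstep ε hε0 (min_le_left _ _)
    have hfs : f (sInf S) - ε • 1 = f (sInf S - ε) := by
      simp only [hfdef, sub_smul]; abel
    have hmem : sInf S - ε ∈ S := by
      rw [hmemS]
      have hεle : ε ≤ sInf S := min_le_right _ _
      refine ⟨⟨by linarith, by linarith⟩, ?_⟩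
      intro i j
      have := hi2 i j
      rwa [hfs] at this
    have := csInf_le hbdd hmem
    linarith

end cont

section assemble
variable {N : ℕ}
local notation "Mat" => Matrix (Fin N) (Fin N) ℝ

lemma exists_semipos (A : Mat) (hoff : ∀ i j, i ≠ j → A i j ≤ 0)
    (hdet : ∀ t : ℝ, 0 ≤ t → (A + t • 1).det ≠ 0) :
    ∃ u : Fin N → ℝ, (∀ i, 0 < u i) ∧ ∀ i, 0 < (A *ᵥ u) i := by
  have hinv := inv_nonneg_all A hoff hdet
  have hA : A.det ≠ 0 := by
    have := hdet 0 le_rfl; simpa using this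
  have hAu : IsUnit A.det := isUnit_iff_ne_zero.mpr hA
  set u : Fin N → ℝ := A⁻¹ *ᵥ (fun _ => 1) with hu
  have hAu1 : A *ᵥ u = fun _ => 1 := by
    rw [hu, Matrix.mulVec_mulVec, Matrix.mul_nonsing_inv _ hAu, Matrix.one_mulVec]
  have hui : ∀ i, u i = ∑ j, A⁻¹ i j := by
    intro i; simp [hu, Matrix.mulVec, dotProduct]
  refine ⟨u, ?_, ?_⟩
  · intro i
    have hnn : 0 ≤ u i := by
      rw [hui]; exact Finset.sum_nonneg fun j _ => hinv i j
    rcases hnn.lt_or_eq with h | h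
    · exact h
    · exfalso
      have hrow : ∀ j ∈ Finset.univ, A⁻¹ i j = 0 :=
        (Finset.sum_eq_zero_iff_of_nonneg fun j _ => hinv i j).mp (by rw [← hui, ← h])
      have h1 : (A⁻¹ * A) i i = 1 := by
        rw [Matrix.nonsing_inv_mul _ hAu, Matrix.one_apply_eq]
      rw [Matrix.mul_apply] at h1
      rw [Finset.sum_eq_zero fun j hj => by rw [hrow j hj, zero_mul]] at h1
      exact zero_ne_one h1
  · intro i
    rw [hAu1]; norm_num

lemma det_ne_of_heig (A : Mat)
    (heig : ∀ μ : ℂ, (A.map Complex.ofReal).charpoly.IsRoot μ → 0 < μ.re) :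
    ∀ t : ℝ, 0 ≤ t → (A + t • 1).det ≠ 0 := by
  intro t ht hdet0
  set B : Matrix (Fin N) (Fin N) ℂ := A.map Complex.ofReal with hB
  have hroot : B.charpoly.IsRoot (-(t:ℂ)) := by
    rw [Polynomial.IsRoot.def]
    have h1 : B.charpoly.eval (-(t:ℂ))
        = ((Matrix.charmatrix B).map (Polynomial.evalRingHom (-(t:ℂ)))).det := by
      have := RingHom.map_det (Polynomial.evalRingHom (-(t:ℂ))) (Matrix.charmatrix B)
      rw [RingHom.mapMatrix_apply] at this
      simpa [Matrix.charpoly] using this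
    have h2 : (Matrix.charmatrix B).map (Polynomial.evalRingHom (-(t:ℂ)))
        = (-1 : ℂ) • ((A + t • 1).map Complex.ofReal) := by
      ext i j
      rcases eq_or_ne i j with rfl | hij
      · simp [Matrix.charmatrix_apply_eq, Matrix.map_apply, Matrix.one_apply_eq, hB]
        push_cast; ring
      · simp [Matrix.charmatrix_apply_ne _ _ _ hij, Matrix.map_apply,
          Matrix.one_apply_ne hij, hB]
    have h3 : ((A + t • 1).map Complex.ofReal).det = ((A + t • 1).det : ℂ) := by
      have heq : (A + t • 1).map Complex.ofReal = (A + t • 1).map Complex.ofRealHom := rfl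
      rw [heq, ← RingHom.mapMatrix_apply, ← RingHom.map_det]
      rfl
    rw [h1, h2, Matrix.det_smul, h3, hdet0]
    simp
  have := heig _ hroot
  simp only [Complex.neg_re, Complex.ofReal_re] at this
  linarith

end assemble

/-- For a nonsingular M-matrix `A` (nonpositive off-diagonal
entries, all complex eigenvalues with positive real part) there is a positive
diagonal matrix `G` with `G*A + Aᵀ*G` symmetric positive definite. -/
theorem M_matrix_diagonal_lyapunov
    (N : ℕ) (A : Matrix (Fin N) (Fin N) ℝ)
    (hoff : ∀ i j, i ≠ j → A i j ≤ 0)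
    (heig : ∀ μ : ℂ, (A.map Complex.ofReal).charpoly.IsRoot μ → 0 < μ.re) :
    ∃ g : Fin N → ℝ, (∀ i, 0 < g i) ∧
      (Matrix.diagonal g * A + Aᵀ * Matrix.diagonal g).PosDef := by
  have hdetA : ∀ t : ℝ, 0 ≤ t → (A + t • 1).det ≠ 0 := det_ne_of_heig A heig
  have hdetAT : ∀ t : ℝ, 0 ≤ t → (Aᵀ + t • 1).det ≠ 0 := by
    intro t htt
    have htr : Aᵀ + t • 1 = (A + t • 1)ᵀ := by
      rw [Matrix.transpose_add, Matrix.transpose_smul, Matrix.transpose_one]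
    rw [htr, Matrix.det_transpose]
    exact hdetA t htt
  obtain ⟨u, hu, hAu⟩ := exists_semipos A hoff hdetA
  obtain ⟨v, hv, hAv⟩ := exists_semipos Aᵀ
    (fun i j hij => hoff j i hij.symm) hdetAT
  set g : Fin N → ℝ := fun i => v i / u i with hg
  have hgpos : ∀ i, 0 < g i := fun i => div_pos (hv i) (hu i)
  refine ⟨g, hgpos, ?_⟩
  apply posdef_of_Z_semipos _ ?_ ?_ u hu ?_
  · rw [Matrix.transpose_add, Matrix.transpose_mul, Matrix.transpose_mul,
      Matrix.transpose_transpose, Matrix.diagonal_transpose]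
    exact add_comm _ _
  · intro i j hij
    have hent : (Matrix.diagonal g * A + Aᵀ * Matrix.diagonal g) i j
        = g i * A i j + A j i * g j := by
      rw [Matrix.add_apply, Matrix.diagonal_mul, Matrix.mul_diagonal,
        Matrix.transpose_apply]
    rw [hent]
    exact add_nonpos
      (mul_nonpos_of_nonneg_of_nonpos (hgpos i).le (hoff i j hij))
      (mul_nonpos_of_nonpos_of_nonneg (hoff j i hij.symm) (hgpos j).le)
  · intro i
    have hgu : Matrix.diagonal g *ᵥ u = v := by
      ext k
      rw [Matrix.mulVec_diagonal]
      exact div_mul_cancel₀ (v k) (hu k).ne'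
    have h1 : (Matrix.diagonal g * A + Aᵀ * Matrix.diagonal g) *ᵥ u
        = Matrix.diagonal g *ᵥ (A *ᵥ u) + Aᵀ *ᵥ v := by
      rw [Matrix.add_mulVec, ← Matrix.mulVec_mulVec, ← Matrix.mulVec_mulVec, hgu]
    rw [h1, Pi.add_apply, Matrix.mulVec_diagonal]
    exact add_pos (mul_pos (hgpos i) (hAu i)) (hAv i)
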